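/- Let d ≥ 2 be an integer, let δ_1 < δ_2 < ⋯ < δ_n be positive integers none of which is divisible by d, and let ℓ ≥ 0 be an integer. Then the determinant of the n × n rational matrix with (i,j) entry binom(δ_i/d, ℓ + j − 1), where binom(x,k) := x(x−1)⋯(x−k+1)/k!, is nonzero in ℚ. -/

import Mathlib

/-- The generalized binomial coefficient `binom(x,k) = x(x-1)⋯(x-k+1)/k!` for `x ∈ ℚ`. -/
def qBinom (x : ℚ) (j : ℕ) : ℚ :=
  (∏ i ∈ Finset.range j, (x - (i : ℚ))) / (j.factorial : ℚ)

/-- Let `d ≥ 2`, let `δ_1 < δ_2 < ⋯ < δ_n` be positive integers none of which is divisible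
by `d`, and let `ℓ ≥ 0`.  Then the determinant of the `n × n` rational matrix with `(i,j)`
entry `binom(δ_i/d, ℓ+j-1)` is nonzero. -/
theorem det_binomial_matrix_ne_zero (d : ℕ) (hd : 2 ≤ d)
    (n : ℕ) (δ : Fin n → ℕ) (hδ : StrictMono δ)
    (hpos : ∀ i, 0 < δ i) (hdvd : ∀ i, ¬ d ∣ δ i) (ℓ : ℕ) :
    (Matrix.of fun i j : Fin n =>
      qBinom ((δ i : ℚ) / (d : ℚ)) (ℓ + (j : ℕ))).det ≠ 0 := by
  have hd0 : (d : ℚ) ≠ 0 := by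
    have : 0 < d := lt_of_lt_of_le (by norm_num) hd
    exact_mod_cast this.ne'
  set x : Fin n → ℚ := fun i => (δ i : ℚ) / d with hx
  -- x i is never a natural number
  have hxk : ∀ (i : Fin n) (k : ℕ), x i - (k : ℚ) ≠ 0 := by
    intro i k h
    apply hdvd i
    have : (δ i : ℚ) = (k : ℚ) * d := by
      have : x i = (k : ℚ) := by linarith [sub_eq_zero.mp h]
      rw [show x i = (δ i : ℚ) / d from rfl, div_eq_iff hd0] at this
      linarith
    have : δ i = k * d := by exact_mod_cast this
    exact ⟨k, by rw [this, mul_comm]⟩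
  set p : Fin n → Polynomial ℚ := fun j =>
    ∏ k ∈ Finset.range (j : ℕ), (Polynomial.X - Polynomial.C (k : ℚ)) with hp
  have hmonic : ∀ j, (p j).Monic := fun j =>
    Polynomial.monic_prod_of_monic _ _ fun k _ => Polynomial.monic_X_sub_C _
  have hdeg : ∀ j, (p j).natDegree = (j : ℕ) := by
    intro j
    rw [hp, Polynomial.natDegree_prod_of_monic _ _ fun k _ => Polynomial.monic_X_sub_C _]
    simp only [Polynomial.natDegree_X_sub_C, Finset.sum_const, Finset.card_range, smul_eq_mul, mul_one]
  have key : (Matrix.of fun i j : Fin n => qBinom (x i) (ℓ + (j : ℕ))) =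
      (Matrix.diagonal fun i => ∏ k ∈ Finset.range ℓ, (x i - (k : ℚ))) *
      (Matrix.of fun i j : Fin n => (p j).eval (x i - (ℓ : ℚ))) *
      (Matrix.diagonal fun j : Fin n => ((ℓ + (j : ℕ)).factorial : ℚ)⁻¹) := by
    ext i j
    rw [Matrix.mul_diagonal, Matrix.diagonal_mul]
    simp only [Matrix.of_apply, hp, Polynomial.eval_prod, Polynomial.eval_sub,
      Polynomial.eval_X, Polynomial.eval_C, qBinom, Finset.prod_range_add]
    have e : ∀ k : ℕ, x i - ((ℓ + k : ℕ) : ℚ) = x i - ℓ - k := fun k => by push_cast; ring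
    simp only [e]
    rw [div_eq_mul_inv]
  rw [key, Matrix.det_mul, Matrix.det_mul, Matrix.det_diagonal, Matrix.det_diagonal,
    ← Matrix.det_eval_matrixOfPolynomials_eq_det_vandermonde
      (fun i => x i - (ℓ : ℚ)) p hdeg hmonic]
  apply mul_ne_zero
  apply mul_ne_zero
  · rw [Finset.prod_ne_zero_iff]
    intro i _
    rw [Finset.prod_ne_zero_iff]
    intro k _
    exact hxk i k
  · rw [Matrix.det_vandermonde_ne_zero_iff]
    intro a b hab
    have hab' : (δ a : ℚ) / d = δ b / d := sub_left_inj.mp hab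
    rw [div_left_inj' hd0] at hab'
    exact hδ.injective (by exact_mod_cast hab')
  · rw [Finset.prod_ne_zero_iff]
    intro j _
    exact inv_ne_zero (by exact_mod_cast (Nat.factorial_pos _).ne')
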